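/- Sign of the asymptotic phase: if η̃ is a mixing profile for η₊, η₋ ∈ (−1/√3, 1/√3) and φ* = ∫_{−∞}^0 [η̃(ξ) − η₋] dξ, then φ* > 0 when η₊ > η₋ and φ* < 0 when η₊ < η₋; in particular φ* ≠ 0 whenever η₊ ≠ η₋. -/

import Mathlib

noncomputable section

open Real Filter MeasureTheory Set

/-- The coefficient `a(η) = (1 - 3η²)/(1 - η²)`. -/
def aGL (η : ℝ) : ℝ := (1 - 3 * η ^ 2) / (1 - η ^ 2)

/-- The primitive `A(η) = ∫₀^η a(s) ds`. -/
def AGL (η : ℝ) : ℝ := ∫ s in (0:ℝ)..η, aGL s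

lemma sq_lt_third {η : ℝ} (h : η ∈ Set.Ioo (-(1 / Real.sqrt 3)) (1 / Real.sqrt 3)) :
    η ^ 2 < 1 / 3 := by
  have h3 : (0:ℝ) < Real.sqrt 3 := Real.sqrt_pos.2 (by norm_num)
  have habs : |η| < 1 / Real.sqrt 3 := abs_lt.2 ⟨h.1, h.2⟩
  have hsq : η ^ 2 < (1 / Real.sqrt 3) ^ 2 := sq_lt_sq' h.1 h.2
  have : (1 / Real.sqrt 3 : ℝ) ^ 2 = 1 / 3 := by
    rw [div_pow, one_pow, Real.sq_sqrt (by norm_num)]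
  linarith

lemma aGL_pos {η : ℝ} (h : η ^ 2 < 1/3) : 0 < aGL η := by
  have h1 : η ^ 2 < 1 := by nlinarith
  exact div_pos (by nlinarith) (by nlinarith)

lemma aGL_le_one {η : ℝ} (h : η ^ 2 < 1/3) : aGL η ≤ 1 := by
  have h1 : η ^ 2 < 1 := by nlinarith
  rw [aGL, div_le_one (by nlinarith)]; nlinarith

lemma aGL_contOn : ContinuousOn aGL (Set.Ioo (-1:ℝ) 1) := by
  apply ContinuousOn.div (by fun_prop) (by fun_prop)
  intro x hx
  have h1 : x ^ 2 < 1 := by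
    have := abs_lt.2 ⟨hx.1, hx.2⟩
    nlinarith [abs_nonneg x, sq_abs x, (abs_lt.2 ⟨hx.1, hx.2⟩)]
  nlinarith

lemma hasDerivAt_AGL {η : ℝ} (h : η ∈ Set.Ioo (-1:ℝ) 1) : HasDerivAt AGL (aGL η) η := by
  have hsub : Set.uIcc (0:ℝ) η ⊆ Set.Ioo (-1:ℝ) 1 :=
    Set.ordConnected_Ioo.uIcc_subset (by constructor <;> norm_num) h
  have hint : IntervalIntegrable aGL volume 0 η :=
    (aGL_contOn.mono hsub).intervalIntegrable
  have hmeas : StronglyMeasurableAtFilter aGL (nhds η) volume := by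
    refine ⟨Set.Ioo (-1:ℝ) 1, Ioo_mem_nhds h.1 h.2, ?_⟩
    exact (aGL_contOn.mono (by simp)).aestronglyMeasurable measurableSet_Ioo
  exact intervalIntegral.integral_hasDerivAt_right hint hmeas (aGL_contOn.continuousAt (Ioo_mem_nhds h.1 h.2))

lemma aGL_neg (η : ℝ) : aGL (-η) = aGL η := by unfold aGL; ring_nf

lemma AGL_neg (η : ℝ) : AGL (-η) = - AGL η := by
  have : ∫ s in (0:ℝ)..η, aGL s = ∫ s in (0:ℝ)..η, aGL (-s) := by
    refine intervalIntegral.integral_congr fun s _ => (aGL_neg s).symm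
  rw [AGL, AGL, this, intervalIntegral.integral_comp_neg]
  rw [neg_zero, intervalIntegral.integral_symm]

/-- A mixing profile for boundary values `ηp` (at `+∞`) and `ηm` (at `-∞`). -/
def IsMixingProfile (ηp ηm : ℝ) (e : ℝ → ℝ) : Prop :=
  ContDiff ℝ 2 e ∧
  (∀ ξ, e ξ ∈ Set.Ioo (-(1 / Real.sqrt 3)) (1 / Real.sqrt 3)) ∧
  (∀ ξ, deriv (deriv (fun x => AGL (e x))) ξ + ξ / 2 * deriv e ξ = 0) ∧
  Filter.Tendsto e Filter.atTop (nhds ηp) ∧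
  Filter.Tendsto e Filter.atBot (nhds ηm)
lemma isMixingProfile_neg {ηp ηm : ℝ} {e : ℝ → ℝ} (he : IsMixingProfile ηp ηm e) :
    IsMixingProfile (-ηp) (-ηm) (fun ξ => -(e ξ)) := by
  obtain ⟨hcd, hmem, hode, htop, hbot⟩ := he
  refine ⟨hcd.neg, fun ξ => ⟨neg_lt_neg (hmem ξ).2, by have := (hmem ξ).1; linarith⟩, ?_, htop.neg, hbot.neg⟩
  intro ξ
  have h1 : (fun x => AGL (-(e x))) = fun x => -(AGL (e x)) := funext fun x => AGL_neg (e x)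
  have h2 : deriv (fun x => -(AGL (e x))) = fun x => -(deriv (fun y => AGL (e y)) x) :=
    funext fun x => deriv.neg
  have h3 : deriv (fun x => -(e x)) ξ = -(deriv e ξ) := deriv.neg
  rw [h1, h2, h3, deriv.fun_neg]
  have := hode ξ
  linarith

lemma mixing_core (ηp ηm : ℝ)
    (hm : ηm ∈ Set.Ioo (-(1 / Real.sqrt 3)) (1 / Real.sqrt 3))
    (e : ℝ → ℝ) (he : IsMixingProfile ηp ηm e) (hlt : ηm < ηp) :
    0 < ∫ ξ in Set.Iic (0:ℝ), (e ξ - ηm) := by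
  obtain ⟨hcd, hmem, hode, htop, hbot⟩ := he
  have hsq : ∀ ξ, (e ξ) ^ 2 < 1/3 := fun ξ => sq_lt_third (hmem ξ)
  have hIoo1 : ∀ ξ, e ξ ∈ Set.Ioo (-1:ℝ) 1 := by
    intro ξ
    have h := hsq ξ
    constructor <;> nlinarith
  have hde : Differentiable ℝ e := hcd.differentiable (by norm_num)
  have hcd2 : ContDiff ℝ ((1:ℕ∞)+1) e := by convert hcd using 2; rfl
  have hcd' : ContDiff ℝ 1 (deriv e) := (contDiff_succ_iff_deriv.1 hcd2).2.2
  have hde' : Differentiable ℝ (deriv e) := hcd'.differentiable (by norm_num)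
  have hcont' : Continuous (deriv e) := hde'.continuous
  have haf : ∀ ξ, 0 < aGL (e ξ) := fun ξ => aGL_pos (hsq ξ)
  have hA : ∀ ξ, HasDerivAt (fun x => AGL (e x)) (aGL (e ξ) * deriv e ξ) ξ := fun ξ =>
    (hasDerivAt_AGL (hIoo1 ξ)).comp ξ (hde ξ).hasDerivAt
  set v : ℝ → ℝ := fun ξ => aGL (e ξ) * deriv e ξ with hv_def
  have hderivA : deriv (fun x => AGL (e x)) = v := funext fun ξ => (hA ξ).deriv
  have haGLd : ∀ ξ, DifferentiableAt ℝ aGL (e ξ) := by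
    intro ξ
    apply DifferentiableAt.div (by fun_prop) (by fun_prop)
    have := hsq ξ; nlinarith
  have hvd : Differentiable ℝ v := fun ξ =>
    (((haGLd ξ).comp ξ (hde ξ)).mul (hde' ξ))
  have hode' : ∀ ξ, deriv v ξ = -(ξ/2) * deriv e ξ := by
    intro ξ
    have := hode ξ
    rw [hderivA] at this
    linarith
  set c : ℝ → ℝ := fun s => s / (2 * aGL (e s)) with hc_def
  have hagc : Continuous fun s => aGL (e s) := by
    have : ∀ s, ContinuousAt (fun s => aGL (e s)) s := fun s =>
      ((aGL_contOn.continuousAt (Ioo_mem_nhds (hIoo1 s).1 (hIoo1 s).2)).comp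
        (hde.continuous.continuousAt))
    exact continuous_iff_continuousAt.2 this
  have hcc : Continuous c := by
    apply continuous_id.div (continuous_const.mul hagc)
    intro s; exact (by nlinarith [haf s] : (0:ℝ) < 2 * aGL (e s)).ne'
  have hvode : ∀ ξ, HasDerivAt v (-(c ξ * v ξ)) ξ := by
    intro ξ
    have h1 : deriv v ξ = -(c ξ * v ξ) := by
      rw [hode', hc_def, hv_def]
      have ha := (haf ξ).ne'
      field_simp
    exact h1 ▸ (hvd ξ).hasDerivAt
  set C : ℝ → ℝ := fun ξ => ∫ s in (0:ℝ)..ξ, c s with hC_def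
  have hCd : ∀ ξ, HasDerivAt C (c ξ) ξ := fun ξ =>
    intervalIntegral.integral_hasDerivAt_right ((hcc.intervalIntegrable 0 ξ))
      (hcc.stronglyMeasurableAtFilter _ _) hcc.continuousAt
  have hv_eq : ∀ ξ, v ξ = v 0 * Real.exp (-(C ξ)) := by
    have hw : ∀ ξ, HasDerivAt (fun x => v x * Real.exp (C x)) 0 ξ := by
      intro ξ
      have := (hvode ξ).mul ((hCd ξ).exp)
      exact this.congr_deriv (by ring)
    have hconst : ∀ ξ, v ξ * Real.exp (C ξ) = v 0 * Real.exp (C 0) := by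
      intro ξ
      exact is_const_of_deriv_eq_zero (fun x => (hw x).differentiableAt)
        (fun x => (hw x).deriv) ξ 0
    intro ξ
    have h0 : C 0 = 0 := by simp [hC_def]
    have h := hconst ξ
    rw [h0, Real.exp_zero, mul_one] at h
    rw [← h, Real.exp_neg]
    field_simp
  -- v 0 is positive
  have hv0 : 0 < v 0 := by
    by_contra hv0'
    push_neg at hv0'
    have hdle : ∀ ξ, deriv e ξ ≤ 0 := by
      intro ξ
      have h1 : aGL (e ξ) * deriv e ξ ≤ 0 := by
        have : v ξ ≤ 0 := by
          rw [hv_eq ξ]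
          exact mul_nonpos_of_nonpos_of_nonneg hv0' (Real.exp_pos _).le
        exact this
      nlinarith [haf ξ]
    have hanti : Antitone e := fun x y hxy =>
      antitone_of_deriv_nonpos hde hdle hxy
    have h1 : ηp ≤ e 0 := le_of_tendsto htop (eventually_atTop.2 ⟨0, fun ξ hξ => hanti hξ⟩)
    have h2 : e 0 ≤ ηm := ge_of_tendsto hbot (eventually_atBot.2 ⟨0, fun ξ hξ => hanti hξ⟩)
    linarith
  have hvpos : ∀ ξ, 0 < v ξ := fun ξ => by
    rw [hv_eq ξ]; exact mul_pos hv0 (Real.exp_pos _)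
  have hdpos : ∀ ξ, 0 < deriv e ξ := by
    intro ξ
    have h1 : 0 < aGL (e ξ) * deriv e ξ := hvpos ξ
    nlinarith [haf ξ]
  have hmono : StrictMono e := strictMono_of_deriv_pos hdpos
  have hlb : ∀ ξ, ηm < e ξ := by
    intro ξ
    have h1 : ηm ≤ e (ξ - 1) :=
      le_of_tendsto hbot (eventually_atBot.2 ⟨ξ - 1, fun s hs => hmono.monotone hs⟩)
    exact lt_of_le_of_lt h1 (hmono (by linarith))
  -- uniform lower bound on aGL ∘ e on Iic 0
  have hIccsub : Set.Icc ηm (e 0) ⊆ Set.Ioo (-(1 / Real.sqrt 3)) (1 / Real.sqrt 3) :=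
    Set.ordConnected_Ioo.out hm (hmem 0)
  have hIccsub1 : Set.Icc ηm (e 0) ⊆ Set.Ioo (-1 : ℝ) 1 := by
    intro x hx
    have h := sq_lt_third (hIccsub hx)
    constructor <;> nlinarith
  obtain ⟨z, hz, hzmin⟩ := isCompact_Icc.exists_isMinOn ⟨ηm, le_refl _, (hlb 0).le⟩
    (aGL_contOn.mono hIccsub1)
  set a₀ : ℝ := aGL z with ha₀_def
  have ha₀pos : 0 < a₀ := aGL_pos (sq_lt_third (hIccsub hz))
  have hafge : ∀ t ≤ (0:ℝ), a₀ ≤ aGL (e t) := by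
    intro t ht
    exact hzmin ⟨(hlb t).le, hmono.monotone ht⟩
  -- lower bound for C on negative axis
  have hClb : ∀ t ≤ (0:ℝ), t ^ 2 / 4 ≤ C t := by
    intro t ht
    have hint1 : ∫ s in t..(0:ℝ), c s ≤ ∫ s in t..(0:ℝ), s / 2 := by
      apply intervalIntegral.integral_mono_on ht (hcc.intervalIntegrable t 0)
        ((continuous_id.div_const 2).intervalIntegrable t 0)
      intro s hs
      have hs0 : s ≤ 0 := hs.2
      have h1 : 0 < aGL (e s) := haf s
      have h2 : aGL (e s) ≤ 1 := aGL_le_one (hsq s)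
      show s / (2 * aGL (e s)) ≤ s / 2
      rw [div_le_div_iff₀ (by linarith) (by norm_num)]
      nlinarith
    have hint2 : ∫ s in t..(0:ℝ), s / 2 = -(t ^ 2 / 4) := by
      rw [intervalIntegral.integral_div, integral_id]
      ring
    have hCt : C t = -(∫ s in t..(0:ℝ), c s) := by
      rw [hC_def]
      exact (intervalIntegral.integral_symm t 0) 
    rw [hCt]
    linarith [hint1, hint2.symm ▸ hint1]
  -- pointwise bound for v, then for deriv e
  have hvb : ∀ t ≤ (0:ℝ), v t ≤ v 0 * Real.exp (-(t ^ 2 / 4)) := by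
    intro t ht
    rw [hv_eq t]
    exact mul_le_mul_of_nonneg_left (Real.exp_le_exp.2 (by linarith [hClb t ht])) hv0.le
  have hdb : ∀ t ≤ (0:ℝ), deriv e t ≤ v 0 / a₀ * Real.exp (-(t ^ 2 / 4)) := by
    intro t ht
    have h1 : deriv e t = v t / aGL (e t) := by
      field_simp [(haf t).ne']
      rw [hv_def]; ring
    rw [h1]
    calc v t / aGL (e t) ≤ v t / a₀ :=
          div_le_div_of_nonneg_left (hvpos t).le ha₀pos (hafge t ht)
      _ ≤ (v 0 * Real.exp (-(t ^ 2 / 4))) / a₀ := by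
          apply div_le_div_of_nonneg_right (hvb t ht) ha₀pos.le
      _ = v 0 / a₀ * Real.exp (-(t ^ 2 / 4)) := by ring
  -- Gaussian integral
  have hGint : Integrable fun t : ℝ => Real.exp (-(t ^ 2 / 8)) := by
    have h := integrable_exp_neg_mul_sq (b := (8:ℝ)⁻¹) (by norm_num)
    have heq : (fun t : ℝ => Real.exp (-(t ^ 2 / 8))) = fun t : ℝ => Real.exp (-(8⁻¹) * t ^ 2) :=
      funext fun t => by rw [show -(t ^ 2 / 8) = -(8:ℝ)⁻¹ * t ^ 2 by ring]
    rw [heq]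
    exact h
  set G : ℝ := ∫ t : ℝ, Real.exp (-(t ^ 2 / 8)) with hG_def
  have hK : 0 ≤ v 0 / a₀ := le_of_lt (div_pos hv0 ha₀pos)
  have hsum : ∀ ξ ≤ (0:ℝ), ∀ T ≤ ξ, e ξ - e T ≤ v 0 / a₀ * Real.exp (-(ξ ^ 2 / 8)) * G := by
    intro ξ hξ T hT
    have hftc : ∫ t in T..ξ, deriv e t = e ξ - e T :=
      intervalIntegral.integral_deriv_eq_sub (fun x _ => hde x) (hcont'.intervalIntegrable T ξ)
    have hmono1 : ∫ t in T..ξ, deriv e t ≤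
        ∫ t in T..ξ, v 0 / a₀ * Real.exp (-(ξ ^ 2 / 8)) * Real.exp (-(t ^ 2 / 8)) := by
      apply intervalIntegral.integral_mono_on hT (hcont'.intervalIntegrable T ξ)
        (Continuous.intervalIntegrable (by fun_prop) T ξ)
      intro t htt
      have ht0 : t ≤ 0 := le_trans htt.2 hξ
      have h2 : Real.exp (-(t ^ 2 / 4)) ≤ Real.exp (-(ξ ^ 2 / 8)) * Real.exp (-(t ^ 2 / 8)) := by
        rw [← Real.exp_add]
        apply Real.exp_le_exp.2
        have hsq2 : ξ ^ 2 ≤ t ^ 2 := by nlinarith [htt.2]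
        linarith
      calc deriv e t ≤ v 0 / a₀ * Real.exp (-(t ^ 2 / 4)) := hdb t ht0
        _ ≤ v 0 / a₀ * (Real.exp (-(ξ ^ 2 / 8)) * Real.exp (-(t ^ 2 / 8))) :=
            mul_le_mul_of_nonneg_left h2 hK
        _ = v 0 / a₀ * Real.exp (-(ξ ^ 2 / 8)) * Real.exp (-(t ^ 2 / 8)) := by ring
    have hInt3 : ∫ t in T..ξ, v 0 / a₀ * Real.exp (-(ξ ^ 2 / 8)) * Real.exp (-(t ^ 2 / 8))
        = v 0 / a₀ * Real.exp (-(ξ ^ 2 / 8)) * ∫ t in T..ξ, Real.exp (-(t ^ 2 / 8)) :=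
      intervalIntegral.integral_const_mul _ _
    have hG1 : ∫ t in T..ξ, Real.exp (-(t ^ 2 / 8)) ≤ G := by
      rw [intervalIntegral.integral_of_le hT]
      exact setIntegral_le_integral hGint
        (Filter.Eventually.of_forall fun t => (Real.exp_pos _).le)
    have hKE : 0 ≤ v 0 / a₀ * Real.exp (-(ξ ^ 2 / 8)) := mul_nonneg hK (Real.exp_pos _).le
    calc e ξ - e T = ∫ t in T..ξ, deriv e t := hftc.symm
      _ ≤ ∫ t in T..ξ, v 0 / a₀ * Real.exp (-(ξ ^ 2 / 8)) * Real.exp (-(t ^ 2 / 8)) := hmono1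
      _ = v 0 / a₀ * Real.exp (-(ξ ^ 2 / 8)) * ∫ t in T..ξ, Real.exp (-(t ^ 2 / 8)) := hInt3
      _ ≤ v 0 / a₀ * Real.exp (-(ξ ^ 2 / 8)) * G := mul_le_mul_of_nonneg_left hG1 hKE
  have hEb : ∀ ξ ≤ (0:ℝ), e ξ - ηm ≤ v 0 / a₀ * Real.exp (-(ξ ^ 2 / 8)) * G := by
    intro ξ hξ
    have htend : Tendsto (fun T => e ξ - e T) atBot (nhds (e ξ - ηm)) :=
      tendsto_const_nhds.sub hbot
    exact le_of_tendsto htend (eventually_atBot.2 ⟨ξ, fun T hT => hsum ξ hξ T hT⟩)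
  have hgint : Integrable (fun ξ : ℝ => v 0 / a₀ * Real.exp (-(ξ ^ 2 / 8)) * G) :=
    (hGint.const_mul _).mul_const _
  have hfin : IntegrableOn (fun ξ => e ξ - ηm) (Set.Iic (0:ℝ)) := by
    apply Integrable.mono hgint.integrableOn
      ((hde.continuous.sub continuous_const).aestronglyMeasurable.restrict)
    rw [ae_restrict_iff' measurableSet_Iic]
    refine Filter.Eventually.of_forall fun ξ hξ => ?_
    rw [Real.norm_eq_abs, Real.norm_eq_abs, abs_of_nonneg (by simp only [Pi.sub_apply]; linarith [hlb ξ])]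
    exact (hEb ξ hξ).trans (le_abs_self _)
  rw [setIntegral_pos_iff_support_of_nonneg_ae
    (Filter.Eventually.of_forall fun ξ => by simp only [Pi.zero_apply]; linarith [hlb ξ]) hfin]
  have hsub : Set.Iic (0:ℝ) ⊆ Function.support fun ξ => e ξ - ηm := fun ξ _ =>
    ne_of_gt (sub_pos.2 (hlb ξ))
  rw [Set.inter_eq_right.mpr hsub]
  simp [Real.volume_Iic]

/-- Sign of the asymptotic phase `φ* = ∫_{-∞}^0 (η̃(ξ) - η₋) dξ`. -/
theorem mixing_profile_phase_sign
    (ηp ηm : ℝ)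
    (hp : ηp ∈ Set.Ioo (-(1 / Real.sqrt 3)) (1 / Real.sqrt 3))
    (hm : ηm ∈ Set.Ioo (-(1 / Real.sqrt 3)) (1 / Real.sqrt 3))
    (e : ℝ → ℝ) (he : IsMixingProfile ηp ηm e)
    (φstar : ℝ) (hφ : φstar = ∫ ξ in Set.Iic (0:ℝ), (e ξ - ηm)) :
    (ηm < ηp → 0 < φstar) ∧ (ηp < ηm → φstar < 0) ∧ (ηp ≠ ηm → φstar ≠ 0) := by
  have h1 : ηm < ηp → 0 < φstar := fun h => hφ ▸ mixing_core ηp ηm hm e he h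
  have h2 : ηp < ηm → φstar < 0 := by
    intro h
    have hneg := mixing_core (-ηp) (-ηm) ⟨neg_lt_neg hm.2, by linarith [hm.1]⟩ _
      (isMixingProfile_neg he) (by linarith)
    have heq : (fun ξ => -(e ξ) - -ηm) = fun ξ => -(e ξ - ηm) := funext fun ξ => by ring
    rw [show (∫ ξ in Set.Iic (0:ℝ), (-(e ξ) - -ηm)) = ∫ ξ in Set.Iic (0:ℝ), -(e ξ - ηm) from by
      rw [heq], integral_neg] at hneg
    rw [hφ]
    linarith
  refine ⟨h1, h2, fun hne => ?_⟩
  rcases hne.lt_or_gt with h | h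
  · exact ne_of_lt (h2 h)
  · exact ne_of_gt (h1 h)
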